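/- For π, σ ∈ S_n, define the wreath product π≀σ ∈ S_{n²} by (π≀σ)((i−1)·n + j) = (π(i)−1)·n + σ(j) for all i, j ∈ {1,...,n}. Then for all π, σ, τ₁, τ₂ ∈ S_n: LCS(π≀σ, τ₁≀τ₂) = LCS(π,τ₁) · LCS(σ,τ₂), where the LCS on the left is taken in S_{n²}. -/

import Mathlib

open scoped Classical
open Finset

noncomputable section

def oneLine {n : ℕ} (π : Equiv.Perm (Fin n)) : List (Fin n) :=
  (List.finRange n).map π

def lcs {n : ℕ} (π σ : Equiv.Perm (Fin n)) : ℕ :=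
  sSup {k | ∃ l : List (Fin n), l.Sublist (oneLine π) ∧ l.Sublist (oneLine σ) ∧ l.length = k}

lemma sorted_sublist_finRange {m : ℕ} {l : List (Fin m)} (h : l.Pairwise (· < ·)) :
    l.Sublist (List.finRange m) := by
  apply List.sublist_of_subperm_of_pairwise (r := (· ≤ ·))
  · exact List.Nodup.subperm (h.imp ne_of_lt) (fun x _ => List.mem_finRange x)
  · exact h.imp le_of_lt
  · exact List.pairwise_le_finRange m

lemma sublist_oneLine {m : ℕ} (ρ : Equiv.Perm (Fin m)) (l : List (Fin m)) :
    l.Sublist (oneLine ρ) ↔ (l.map ρ.symm).Pairwise (· < ·) := by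
  constructor
  · intro h
    have h2 : (l.map ρ.symm).Sublist ((oneLine ρ).map ρ.symm) := h.map _
    have h3 : (oneLine ρ).map ρ.symm = List.finRange m := by
      simp [oneLine, List.map_map]
    rw [h3] at h2
    exact (List.pairwise_lt_finRange m).sublist h2
  · intro h
    have h2 := (sorted_sublist_finRange h).map ρ
    simpa [oneLine, List.map_map] using h2

lemma lcs_bddAbove {m : ℕ} (π σ : Equiv.Perm (Fin m)) :
    BddAbove {k | ∃ l : List (Fin m), l.Sublist (oneLine π) ∧ l.Sublist (oneLine σ) ∧ l.length = k} := by
  refine ⟨m, fun k hk => ?_⟩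
  obtain ⟨l, h1, _, rfl⟩ := hk
  have := h1.length_le
  simpa [oneLine] using this

lemma length_le_lcs {m : ℕ} {π σ : Equiv.Perm (Fin m)} {l : List (Fin m)}
    (h1 : l.Sublist (oneLine π)) (h2 : l.Sublist (oneLine σ)) : l.length ≤ lcs π σ :=
  le_csSup (lcs_bddAbove π σ) ⟨l, h1, h2, rfl⟩

lemma exists_lcs {m : ℕ} (π σ : Equiv.Perm (Fin m)) :
    ∃ l : List (Fin m), l.Sublist (oneLine π) ∧ l.Sublist (oneLine σ) ∧ l.length = lcs π σ :=
  Nat.sSup_mem (s := {k | ∃ l : List (Fin m), l.Sublist (oneLine π) ∧ l.Sublist (oneLine σ) ∧ l.length = k})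
    ⟨0, [], List.nil_sublist _, List.nil_sublist _, rfl⟩ (lcs_bddAbove π σ)

lemma nat_key {N A B C D : ℕ} (hB : B < N) (hD : D < N) :
    B + N * A < D + N * C ↔ A < C ∨ (A = C ∧ B < D) := by
  rcases Nat.lt_trichotomy A C with h | h | h
  · have h2 : N * (A + 1) ≤ N * C := Nat.mul_le_mul_left N h
    have h3 : N * (A + 1) = N * A + N := Nat.mul_succ N A
    omega
  · subst h; omega
  · have h2 : N * (C + 1) ≤ N * A := Nat.mul_le_mul_left N h
    have h3 : N * (C + 1) = N * C + N := Nat.mul_succ N C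
    omega

lemma finProdFinEquiv_lt_iff {n : ℕ} {a b c d : Fin n} :
    finProdFinEquiv (a, b) < finProdFinEquiv (c, d) ↔ a < c ∨ (a = c ∧ b < d) := by
  have h1 : (finProdFinEquiv (a, b) : Fin (n * n)).val = b.val + n * a.val := rfl
  have h2 : (finProdFinEquiv (c, d) : Fin (n * n)).val = d.val + n * c.val := rfl
  rw [Fin.lt_def, h1, h2]
  simp only [Fin.lt_def, Fin.ext_iff]
  exact nat_key b.isLt d.isLt

/-- The wreath product `π ≀ σ ∈ S_{n²}`: under the identification
`finProdFinEquiv : Fin n × Fin n ≃ Fin (n * n)`, `(i, j) ↦ j + n * i` (i.e. block `i`,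
position `j`), it sends `i * n + j ↦ π(i) * n + σ(j)`. -/
def wreath {n : ℕ} (π σ : Equiv.Perm (Fin n)) : Equiv.Perm (Fin (n * n)) :=
  finProdFinEquiv.symm.trans ((Equiv.prodCongr π σ).trans finProdFinEquiv)

/-- The defining formula of the wreath product. -/
theorem wreath_apply {n : ℕ} (π σ : Equiv.Perm (Fin n)) (i j : Fin n) :
    wreath π σ (finProdFinEquiv (i, j)) = finProdFinEquiv (π i, σ j) := by
  simp [wreath]

lemma wreath_symm {n : ℕ} (π σ : Equiv.Perm (Fin n)) :
    (wreath π σ).symm = wreath π.symm σ.symm := by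
  ext x
  simp [wreath]

def GoodPair {n : ℕ} (π σ : Equiv.Perm (Fin n)) (p q : Fin n × Fin n) : Prop :=
  π.symm p.1 < π.symm q.1 ∨ (p.1 = q.1 ∧ σ.symm p.2 < σ.symm q.2)

lemma sublist_oneLine_wreath {n : ℕ} (π σ : Equiv.Perm (Fin n)) (l : List (Fin (n * n))) :
    l.Sublist (oneLine (wreath π σ)) ↔
      (l.map finProdFinEquiv.symm).Pairwise (GoodPair π σ) := by
  rw [sublist_oneLine, List.pairwise_map, List.pairwise_map]
  refine List.Pairwise.iff (fun a b => ?_)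
  obtain ⟨p, rfl⟩ := finProdFinEquiv.surjective a
  obtain ⟨q, rfl⟩ := finProdFinEquiv.surjective b
  obtain ⟨p1, p2⟩ := p
  obtain ⟨q1, q2⟩ := q
  rw [wreath_symm, wreath_apply, wreath_apply, Equiv.symm_apply_apply,
    Equiv.symm_apply_apply, finProdFinEquiv_lt_iff]
  unfold GoodPair
  simp

lemma goodpair_fst_le {n : ℕ} {π σ : Equiv.Perm (Fin n)} {p q : Fin n × Fin n}
    (h : GoodPair π σ p q) : π.symm p.1 ≤ π.symm q.1 := by
  rcases h with h | ⟨h, _⟩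
  · exact le_of_lt h
  · rw [h]

lemma core_ub {n : ℕ} (π σ τ₁ τ₂ : Equiv.Perm (Fin n)) :
    ∀ (N : ℕ) (L : List (Fin n × Fin n)), L.length ≤ N →
      L.Pairwise (GoodPair π σ) → L.Pairwise (GoodPair τ₁ τ₂) →
      ∃ B : List (Fin n), (B.map π.symm).Pairwise (· < ·) ∧ (B.map τ₁.symm).Pairwise (· < ·) ∧
        (∀ b ∈ B, b ∈ L.map Prod.fst) ∧ L.length ≤ B.length * lcs σ τ₂ := by
  intro N
  induction N with
  | zero =>
    intro L hL _ _
    have hLnil : L = [] := List.length_eq_zero_iff.mp (Nat.le_zero.mp hL)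
    subst hLnil
    exact ⟨[], by simp, by simp, by simp, by simp⟩
  | succ N ih =>
    intro L hlen h1 h2
    match L, h1, h2, hlen with
    | [], _, _, _ => exact ⟨[], by simp, by simp, by simp, by simp⟩
    | p :: L', h1, h2, hlen =>
      classical
      have key : ∃ t r : List (Fin n × Fin n), t ++ r = p :: L' ∧ t ≠ [] ∧
          (∀ x ∈ t, x.1 = p.1) ∧ r.Sublist L' ∧
          (∀ x ∈ r, π.symm p.1 < π.symm x.1 ∧ τ₁.symm p.1 < τ₁.symm x.1) := by
        set P : (Fin n × Fin n) → Bool := fun q => decide (q.1 = p.1) with hP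
        have hPp : P p = true := by simp [hP]
        have hrL' : ((p :: L').dropWhile P).Sublist L' := by
          rw [List.dropWhile_cons_of_pos hPp]
          exact List.dropWhile_sublist P
        refine ⟨(p :: L').takeWhile P, (p :: L').dropWhile P,
          List.takeWhile_append_dropWhile (p := P) (l := p :: L'), ?_, ?_, hrL', ?_⟩
        · rw [List.takeWhile_cons_of_pos hPp]
          simp
        · intro x hx
          have := List.mem_takeWhile_imp hx
          simpa [hP] using this
        · cases hr0 : (p :: L').dropWhile P with
          | nil => simp
          | cons r₀ r'' =>
            have hne : r₀.1 ≠ p.1 := by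
              have h := List.head?_dropWhile_not P (p :: L')
              rw [hr0] at h
              simp only [List.head?_cons] at h
              simpa [hP] using h
            rw [hr0] at hrL'
            have hg1 : GoodPair π σ p r₀ :=
              List.rel_of_pairwise_cons h1 (hrL'.subset (by simp))
            have hg2 : GoodPair τ₁ τ₂ p r₀ :=
              List.rel_of_pairwise_cons h2 (hrL'.subset (by simp))
            have hs1 : π.symm p.1 < π.symm r₀.1 := by
              rcases hg1 with h | ⟨h, _⟩
              · exact h
              · exact absurd h.symm hne
            have hs2 : τ₁.symm p.1 < τ₁.symm r₀.1 := by
              rcases hg2 with h | ⟨h, _⟩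
              · exact h
              · exact absurd h.symm hne
            have hsub : ((r₀ :: r'') : List (Fin n × Fin n)).Sublist (p :: L') := by
              rw [← hr0]
              exact List.dropWhile_sublist P
            have hp1 := h1.sublist hsub
            have hp2 := h2.sublist hsub
            intro x hx
            rcases List.mem_cons.mp hx with rfl | hx'
            · exact ⟨hs1, hs2⟩
            · exact ⟨lt_of_lt_of_le hs1 (goodpair_fst_le (List.rel_of_pairwise_cons hp1 hx')),
                lt_of_lt_of_le hs2 (goodpair_fst_le (List.rel_of_pairwise_cons hp2 hx'))⟩
      obtain ⟨t, r, htr, htne, htall, hrL', hstrict⟩ := key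
      have hrsub : r.Sublist (p :: L') := hrL'.trans (List.sublist_cons_self p L')
      have hrlen : r.length ≤ N := by
        have hl := congrArg List.length htr
        simp only [List.length_append, List.length_cons] at hl
        have ht1 : 0 < t.length := List.length_pos_iff.mpr htne
        simp only [List.length_cons] at hlen
        omega
      obtain ⟨B, hB1, hB2, hBmem, hBlen⟩ := ih r hrlen (h1.sublist hrsub) (h2.sublist hrsub)
      have hBr : ∀ b ∈ B, ∃ x ∈ r, x.1 = b := by
        intro b hb
        obtain ⟨x, hx, rfl⟩ := List.mem_map.mp (hBmem b hb)
        exact ⟨x, hx, rfl⟩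
      refine ⟨p.1 :: B, ?_, ?_, ?_, ?_⟩
      · rw [List.map_cons]
        refine List.pairwise_cons.mpr ⟨?_, hB1⟩
        intro y hy
        obtain ⟨b, hb, rfl⟩ := List.mem_map.mp hy
        obtain ⟨x, hx, rfl⟩ := hBr b hb
        exact (hstrict x hx).1
      · rw [List.map_cons]
        refine List.pairwise_cons.mpr ⟨?_, hB2⟩
        intro y hy
        obtain ⟨b, hb, rfl⟩ := List.mem_map.mp hy
        obtain ⟨x, hx, rfl⟩ := hBr b hb
        exact (hstrict x hx).2
      · intro b hb
        rcases List.mem_cons.mp hb with rfl | hb'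
        · exact List.mem_map.mpr ⟨p, by simp, rfl⟩
        · obtain ⟨x, hx, rfl⟩ := hBr b hb'
          exact List.mem_map.mpr ⟨x, hrsub.subset hx, rfl⟩
      · -- length bound
        have htlcs : t.length ≤ lcs σ τ₂ := by
          have htsub : t.Sublist (p :: L') := htr ▸ List.sublist_append_left t r
          have hps : t.Pairwise (fun a b => σ.symm a.2 < σ.symm b.2) := by
            refine (h1.sublist htsub).imp_of_mem ?_
            intro a b ha hb hab
            rcases hab with h | ⟨_, h⟩
            · rw [htall a ha, htall b hb] at h
              exact absurd h (lt_irrefl _)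
            · exact h
          have hpt : t.Pairwise (fun a b => τ₂.symm a.2 < τ₂.symm b.2) := by
            refine (h2.sublist htsub).imp_of_mem ?_
            intro a b ha hb hab
            rcases hab with h | ⟨_, h⟩
            · rw [htall a ha, htall b hb] at h
              exact absurd h (lt_irrefl _)
            · exact h
          have hc1 : (t.map Prod.snd).Sublist (oneLine σ) := by
            rw [sublist_oneLine, List.map_map, List.pairwise_map]
            exact hps
          have hc2 : (t.map Prod.snd).Sublist (oneLine τ₂) := by
            rw [sublist_oneLine, List.map_map, List.pairwise_map]
            exact hpt
          have := length_le_lcs hc1 hc2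
          simpa using this
        have hl := congrArg List.length htr
        simp only [List.length_append, List.length_cons] at hl
        have hmul : (B.length + 1) * lcs σ τ₂ = B.length * lcs σ τ₂ + lcs σ τ₂ :=
          Nat.succ_mul _ _
        simp only [List.length_cons]
        omega

lemma sum_map_const' {α : Type*} (B : List α) (q : ℕ) :
    (B.map (fun _ => q)).sum = B.length * q := by
  induction B with
  | nil => simp
  | cons a B ih => simp [ih, Nat.succ_mul]; omega

lemma pairwise_product {n : ℕ} {π σ : Equiv.Perm (Fin n)} {B C : List (Fin n)}
    (hB : (B.map π.symm).Pairwise (· < ·)) (hC : (C.map σ.symm).Pairwise (· < ·)) :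
    ((B.map (fun b => C.map (fun c => (b, c)))).flatten).Pairwise (GoodPair π σ) := by
  rw [List.pairwise_flatten]
  constructor
  · intro l hl
    obtain ⟨b, hb, rfl⟩ := List.mem_map.mp hl
    rw [List.pairwise_map]
    have hC' : C.Pairwise (fun c c' => σ.symm c < σ.symm c') := (List.pairwise_map).mp hC
    exact hC'.imp (fun h => Or.inr ⟨rfl, h⟩)
  · rw [List.pairwise_map]
    have hB' : B.Pairwise (fun b b' => π.symm b < π.symm b') := (List.pairwise_map).mp hB
    refine hB'.imp_of_mem ?_
    intro b b' _ _ h x hx y hy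
    obtain ⟨c, _, rfl⟩ := List.mem_map.mp hx
    obtain ⟨c', _, rfl⟩ := List.mem_map.mp hy
    exact Or.inl h

lemma core_lb {n : ℕ} (π σ τ₁ τ₂ : Equiv.Perm (Fin n)) {B C : List (Fin n)}
    (hB1 : B.Sublist (oneLine π)) (hB2 : B.Sublist (oneLine τ₁))
    (hC1 : C.Sublist (oneLine σ)) (hC2 : C.Sublist (oneLine τ₂)) :
    ∃ l : List (Fin (n * n)), l.Sublist (oneLine (wreath π σ)) ∧
      l.Sublist (oneLine (wreath τ₁ τ₂)) ∧ l.length = B.length * C.length := by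
  have hB1' := (sublist_oneLine π B).mp hB1
  have hB2' := (sublist_oneLine τ₁ B).mp hB2
  have hC1' := (sublist_oneLine σ C).mp hC1
  have hC2' := (sublist_oneLine τ₂ C).mp hC2
  refine ⟨((B.map (fun b => C.map (fun c => (b, c)))).flatten).map finProdFinEquiv, ?_, ?_, ?_⟩
  · rw [sublist_oneLine_wreath]
    have heq : (((B.map (fun b => C.map (fun c => (b, c)))).flatten).map
        finProdFinEquiv).map finProdFinEquiv.symm
        = (B.map (fun b => C.map (fun c => (b, c)))).flatten := by
      simp [List.map_map, Function.comp_def]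
    rw [heq]
    exact pairwise_product hB1' hC1'
  · rw [sublist_oneLine_wreath]
    have heq : (((B.map (fun b => C.map (fun c => (b, c)))).flatten).map
        finProdFinEquiv).map finProdFinEquiv.symm
        = (B.map (fun b => C.map (fun c => (b, c)))).flatten := by
      simp [List.map_map, Function.comp_def]
    rw [heq]
    exact pairwise_product hB2' hC2'
  · rw [List.length_map, List.length_flatten, List.map_map]
    have : (List.length ∘ fun b : Fin n => C.map (fun c => (b, c))) = fun _ => C.length := by
      funext b; simp
    rw [this, sum_map_const']

theorem lcs_wreath {n : ℕ} (π σ τ₁ τ₂ : Equiv.Perm (Fin n)) :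
    lcs (wreath π σ) (wreath τ₁ τ₂) = lcs π τ₁ * lcs σ τ₂ := by
  have hbdd := lcs_bddAbove (wreath π σ) (wreath τ₁ τ₂)
  have hub : ∀ k ∈ {k | ∃ l : List (Fin (n * n)), l.Sublist (oneLine (wreath π σ)) ∧
      l.Sublist (oneLine (wreath τ₁ τ₂)) ∧ l.length = k}, k ≤ lcs π τ₁ * lcs σ τ₂ := by
    rintro k ⟨l, hl1, hl2, rfl⟩
    have hp1 := (sublist_oneLine_wreath π σ l).mp hl1
    have hp2 := (sublist_oneLine_wreath τ₁ τ₂ l).mp hl2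
    obtain ⟨B, hB1, hB2, _, hlen⟩ :=
      core_ub π σ τ₁ τ₂ (l.map finProdFinEquiv.symm).length _ le_rfl hp1 hp2
    have hBlcs : B.length ≤ lcs π τ₁ :=
      length_le_lcs ((sublist_oneLine π B).mpr hB1) ((sublist_oneLine τ₁ B).mpr hB2)
    calc l.length = (l.map finProdFinEquiv.symm).length := by simp
      _ ≤ B.length * lcs σ τ₂ := hlen
      _ ≤ lcs π τ₁ * lcs σ τ₂ := Nat.mul_le_mul_right _ hBlcs
  have hlb : lcs π τ₁ * lcs σ τ₂ ∈ {k | ∃ l : List (Fin (n * n)),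
      l.Sublist (oneLine (wreath π σ)) ∧ l.Sublist (oneLine (wreath τ₁ τ₂)) ∧ l.length = k} := by
    obtain ⟨B, hB1, hB2, hBl⟩ := exists_lcs π τ₁
    obtain ⟨C, hC1, hC2, hCl⟩ := exists_lcs σ τ₂
    obtain ⟨l, h1, h2, hl⟩ := core_lb π σ τ₁ τ₂ hB1 hB2 hC1 hC2
    exact ⟨l, h1, h2, by rw [hl, hBl, hCl]⟩
  exact le_antisymm
    (csSup_le ⟨0, [], List.nil_sublist _, List.nil_sublist _, rfl⟩ hub)
    (le_csSup hbdd hlb)
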